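/- Let κ be an uncountable cardinal with κ = κ^{<κ} and T a subtree of κ^{<κ} × κ^{<κ}. If there is an ∃^x-perfect embedding into T, then the projection p[T] contains a closed-in-κ^κ subset homeomorphic to κ^2. -/

import Mathlib

open Cardinal Set Topology

universe u

/-- The bounded topology on `K → Y`: basic open sets are determined by an
initial segment of values. -/
def bTop (K : Type u) [LinearOrder K] (Y : Type u) : TopologicalSpace (K → Y) :=
  TopologicalSpace.generateFrom
    {U | ∃ (b : K) (s : K → Y), U = {x | ∀ i, i < b → x i = s i}}

/-- `A` is κ-compact: every open cover (for the bounded topology) has a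
subcover of size `< #K`. -/
def KCompact (K : Type u) [LinearOrder K] {Y : Type u} (A : Set (K → Y)) : Prop :=
  ∀ 𝒰 : Set (Set (K → Y)), (∀ U ∈ 𝒰, IsOpen[bTop K Y] U) → A ⊆ ⋃₀ 𝒰 →
    ∃ 𝒱 ⊆ 𝒰, #𝒱 < #K ∧ A ⊆ ⋃₀ 𝒱

/-- `B` is a `K_κ` subset: a union of κ-many κ-compact sets. -/
def IsKK (K : Type u) [LinearOrder K] (B : Set (K → K)) : Prop :=
  ∃ C : K → Set (K → K), (∀ b, KCompact K (C b)) ∧ B = ⋃ b, C b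

/-- Nodes of the tree `Y^{<K}`: sequences of length `b`, for `b : K`. -/
abbrev Nd (K : Type u) [LinearOrder K] (Y : Type u) := Σ b : K, (Set.Iio b → Y)

/-- Restriction of a node to a smaller length. -/
def ndRes (K : Type u) [LinearOrder K] {Y : Type u} (p : Nd K Y) (c : K) (h : c ≤ p.1) :
    Nd K Y :=
  ⟨c, fun i => p.2 ⟨i.1, lt_of_lt_of_le i.2 h⟩⟩

/-- Restriction of a branch `x : K → Y` to length `b`. -/
def xRes (K : Type u) [LinearOrder K] {Y : Type u} (x : K → Y) (b : K) : Nd K Y :=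
  ⟨b, fun i => x i.1⟩

/-- `q` extends `p` as a sequence. -/
def NdExt (K : Type u) [LinearOrder K] {Y : Type u} (q p : Nd K Y) : Prop :=
  ∃ h : p.1 ≤ q.1, ∀ i : Set.Iio p.1, q.2 ⟨i.1, lt_of_lt_of_le i.2 h⟩ = p.2 i

/-- A subtree of `Y^{<K}`: a set of nodes closed under restriction. -/
def IsSubtree (K : Type u) [LinearOrder K] {Y : Type u} (T : Set (Nd K Y)) : Prop :=
  ∀ p ∈ T, ∀ c, ∀ h : c ≤ p.1, ndRes K p c h ∈ T

/-- The body `[T]`: the set of `K`-branches through `T`. -/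
def body (K : Type u) [LinearOrder K] {Y : Type u} (T : Set (Nd K Y)) : Set (K → Y) :=
  {x | ∀ b : K, xRes K x b ∈ T}

/-- `T` is pruned: every node is extended by a branch. -/
def Pruned (K : Type u) [LinearOrder K] {Y : Type u} (T : Set (Nd K Y)) : Prop :=
  ∀ p ∈ T, ∃ x ∈ body K T, NdExt K (xRes K x p.1) p

/-- `b` is a limit element: not least, and with no immediate predecessor. -/
def IsLimElt (K : Type u) [LinearOrder K] (b : K) : Prop :=
  (∃ c, c < b) ∧ ∀ c, c < b → ∃ d, c < d ∧ d < b

/-- Superclosed: closed under unions of increasing sequences of length `< K`. -/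
def Superclosed (K : Type u) [LinearOrder K] {Y : Type u} (T : Set (Nd K Y)) : Prop :=
  ∀ p : Nd K Y, IsLimElt K p.1 → (∀ c, ∀ h : c < p.1, ndRes K p c h.le ∈ T) → p ∈ T

/-- The values at position `p.1` realized by extensions of `p` in `T`, i.e. the
immediate successors of `p` in `T`. -/
def splitVals (K : Type u) [LinearOrder K] {Y : Type u} (T : Set (Nd K Y)) (p : Nd K Y) :
    Set Y :=
  {a | ∃ q ∈ T, ∃ h : p.1 < q.1,
    (∀ i : Set.Iio p.1, q.2 ⟨i.1, i.2.trans h⟩ = p.2 i) ∧ q.2 ⟨p.1, h⟩ = a}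

/-- A perfect tree: a nonempty superclosed subtree in which every node is
extended by a 2-splitting node. -/
def PerfectTree (K : Type u) [LinearOrder K] (T : Set (Nd K K)) : Prop :=
  T.Nonempty ∧ IsSubtree K T ∧ Superclosed K T ∧
    ∀ p ∈ T, ∃ q ∈ T, NdExt K q p ∧
      ∃ a ∈ splitVals K T q, ∃ a' ∈ splitVals K T q, a ≠ a'

/-- A κ-Miller tree: a nonempty superclosed subtree in which every node is
extended by a κ-splitting node. -/
def MillerTree (K : Type u) [LinearOrder K] (T : Set (Nd K K)) : Prop :=
  T.Nonempty ∧ IsSubtree K T ∧ Superclosed K T ∧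
    ∀ p ∈ T, ∃ q ∈ T, NdExt K q p ∧ #K ≤ #(splitVals K T q)

/-- A κ-tree: a subtree of height `K` all of whose levels have size `< #K`. -/
def KTree (K : Type u) [LinearOrder K] {Y : Type u} (T : Set (Nd K Y)) : Prop :=
  (∀ b : K, ∃ t : Set.Iio b → Y, (⟨b, t⟩ : Nd K Y) ∈ T) ∧
    ∀ b : K, #{t : Set.Iio b → Y | (⟨b, t⟩ : Nd K Y) ∈ T} < #K

/-- A κ-Aronszajn tree: a κ-tree with no branch. -/
def Aronszajn (K : Type u) [LinearOrder K] (S : Set (Nd K K)) : Prop :=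
  IsSubtree K S ∧ KTree K S ∧ body K S = ∅

/-- The tree property for `K`: every κ-tree has a branch. -/
def TreeProp (K : Type u) [LinearOrder K] : Prop :=
  ∀ T : Set (Nd K K), IsSubtree K T → KTree K T → (body K T).Nonempty

/-- weak compactness: inaccessibility together with the tree property. -/
def WComp (K : Type u) [LinearOrder K] : Prop :=
  (#K).IsInaccessible ∧ TreeProp K

/-- `C` is homeomorphic to the generalized Baire space `K → K`. -/
def HomeoToBaire (K : Type u) [LinearOrder K] (C : Set (K → K)) : Prop :=
  letI := bTop K K
  Nonempty (↥C ≃ₜ (K → K))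

/-- `C` is homeomorphic to the generalized Cantor space `K → ULift.{u} Bool`. -/
def HomeoToCantor (K : Type u) [LinearOrder K] (C : Set (K → K)) : Prop :=
  letI := bTop K K
  letI : TopologicalSpace (K → ULift.{u} Bool) := bTop K (ULift.{u} Bool)
  Nonempty (↥C ≃ₜ (K → ULift.{u} Bool))

/-- The Hurewicz dichotomy for `A`. -/
def HD (K : Type u) [LinearOrder K] (A : Set (K → K)) : Prop :=
  (∃ B, IsKK K B ∧ A ⊆ B) ∨
    ∃ C ⊆ A, IsClosed[bTop K K] C ∧ HomeoToBaire K C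

/-- The Miller-tree Hurewicz dichotomy for `A`. -/
def MillerHD (K : Type u) [LinearOrder K] (A : Set (K → K)) : Prop :=
  (∃ B, IsKK K B ∧ A ⊆ B) ∨ ∃ T, MillerTree K T ∧ body K T ⊆ A

/-- Σ¹₁ subsets of `K → K`: projections of closed subsets of the product. -/
def Sigma11 (K : Type u) [LinearOrder K] (A : Set (K → K)) : Prop :=
  letI := bTop K K
  ∃ C : Set ((K → K) × (K → K)), IsClosed C ∧ A = Prod.fst '' C

/-- The κ-perfect set property. -/
def PSP (K : Type u) [LinearOrder K] (A : Set (K → K)) : Prop :=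
  #A ≤ #K ∨ ∃ C ⊆ A, IsClosed[bTop K K] C ∧ HomeoToCantor K C

/-- `A ⊆ K → K` is bounded. -/
def BddSet (K : Type u) [LinearOrder K] (A : Set (K → K)) : Prop :=
  ∃ x : K → K, ∀ y ∈ A, ∀ i, y i ≤ x i

/-- `A ⊆ K → K` is eventually bounded. -/
def EvBddSet (K : Type u) [LinearOrder K] (A : Set (K → K)) : Prop :=
  ∃ x : K → K, ∀ y ∈ A, ∃ b : K, ∀ i, b ≤ i → y i ≤ x i

/-- Nodes of the product tree `K^{<K} × K^{<K}` (pairs of equal length). -/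
abbrev PNd (K : Type u) [LinearOrder K] := Σ b : K, (Set.Iio b → K) × (Set.Iio b → K)

/-- Subtree of the product tree: closed under simultaneous restriction. -/
def IsPSubtree (K : Type u) [LinearOrder K] (T : Set (PNd K)) : Prop :=
  ∀ p ∈ T, ∀ c, ∀ h : c ≤ p.1,
    (⟨c, fun i => p.2.1 ⟨i.1, lt_of_lt_of_le i.2 h⟩,
        fun i => p.2.2 ⟨i.1, lt_of_lt_of_le i.2 h⟩⟩ : PNd K) ∈ T

/-- The projection `p[T]` of the set of branches of a product tree to the first
coordinate. -/
def pProj (K : Type u) [LinearOrder K] (T : Set (PNd K)) : Set (K → K) :=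
  {x | ∃ y : K → K, ∀ b : K,
    (⟨b, fun i => x i.1, fun i => y i.1⟩ : PNd K) ∈ T}

/-- An `∃^x`-perfect embedding into a product tree `T`. -/
def PerfEmb (K : Type u) [LinearOrder K] (T : Set (PNd K)) (e : Nd K (ULift.{u} Bool) → PNd K) : Prop :=
  (∀ u, e u ∈ T) ∧
  (∀ u u' : Nd K (ULift.{u} Bool), ∀ h : u.1 < u'.1,
     (∀ i : Set.Iio u.1, u'.2 ⟨i.1, i.2.trans h⟩ = u.2 i) →
     ∃ h' : (e u).1 < (e u').1,
       (∀ i : Set.Iio (e u).1, (e u').2.1 ⟨i.1, i.2.trans h'⟩ = (e u).2.1 i) ∧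
       (∀ i : Set.Iio (e u).1, (e u').2.2 ⟨i.1, i.2.trans h'⟩ = (e u).2.2 i)) ∧
  (∀ u u' : Nd K (ULift.{u} Bool), ¬ NdExt K u u' → ¬ NdExt K u' u →
     ¬ NdExt K ⟨(e u).1, (e u).2.1⟩ ⟨(e u').1, (e u').2.1⟩ ∧
     ¬ NdExt K ⟨(e u').1, (e u').2.1⟩ ⟨(e u).1, (e u).2.1⟩) ∧
  (∀ u : Nd K (ULift.{u} Bool), IsLimElt K u.1 → ∀ d, d < (e u).1 →
     ∃ c, ∃ h : c < u.1, d < (e (ndRes K u c h.le)).1)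

/-- The immediate extension `u⌢⟨a⟩` of a node `u` by a value `a`. -/
def extNd (K : Type u) [LinearOrder K] [SuccOrder K] (u : Nd K K) (a : K) : Nd K K :=
  ⟨Order.succ u.1, fun i => if h : i.1 < u.1 then u.2 ⟨i.1, h⟩ else a⟩

/-- An `∃^x`-superperfect embedding into a product tree `T`. -/
def SuperPerfEmb (K : Type u) [LinearOrder K] [SuccOrder K] (T : Set (PNd K))
    (e : Nd K K → PNd K) : Prop :=
  (∀ u, e u ∈ T) ∧
  (∀ u u' : Nd K K, ∀ h : u.1 < u'.1,
     (∀ i : Set.Iio u.1, u'.2 ⟨i.1, i.2.trans h⟩ = u.2 i) →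
     ∃ h' : (e u).1 < (e u').1,
       (∀ i : Set.Iio (e u).1, (e u').2.1 ⟨i.1, i.2.trans h'⟩ = (e u).2.1 i) ∧
       (∀ i : Set.Iio (e u).1, (e u').2.2 ⟨i.1, i.2.trans h'⟩ = (e u).2.2 i)) ∧
  (∀ u : Nd K K, IsLimElt K u.1 → ∀ d, d < (e u).1 →
     ∃ c, ∃ h : c < u.1, d < (e (ndRes K u c h.le)).1) ∧
  (∀ u : Nd K K, ∃ γ : K, (e u).1 ≤ γ ∧
     ∃ hlen : ∀ a : K, γ < (e (extNd K u a)).1,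
       ∀ a b : K, a ≠ b →
         (∀ i : Set.Iio γ,
           (e (extNd K u a)).2.1 ⟨i.1, i.2.trans (hlen a)⟩ =
           (e (extNd K u b)).2.1 ⟨i.1, i.2.trans (hlen b)⟩) ∧
         (e (extNd K u a)).2.1 ⟨γ, hlen a⟩ ≠ (e (extNd K u b)).2.1 ⟨γ, hlen b⟩)

section
variable {K : Type u} [LinearOrder K] [WellFoundedLT K]

example : WellFounded ((· < ·) : K → K → Prop) := wellFounded_lt

open Classical in
noncomputable def skel (b : K) : K :=
  if h : ∃ c, b < c then (wellFounded_lt (α := K)).min {c | b < c} h else b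

lemma nomax (hseg : ∀ b : K, #(Set.Iio b) < #K) (hunc : ℵ₀ < #K) (b : K) : ∃ c, b < c := by
  by_contra h
  push_neg at h
  have hsub : (Set.univ : Set K) ⊆ Set.Iic b := fun c _ => h c
  have h1 : #K ≤ #(Set.Iic b) := by
    rw [← Cardinal.mk_univ (α := K)]
    exact Cardinal.mk_le_mk_of_subset hsub
  have h2 : #(Set.Iic b) < #K := by
    rw [← Set.Iio_insert]
    refine (Cardinal.mk_insert_le).trans_lt ?_
    rcases lt_or_ge (#(Set.Iio b)) ℵ₀ with hf | hf
    · exact (Cardinal.add_lt_aleph0 hf Cardinal.one_lt_aleph0).trans hunc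
    · rw [Cardinal.add_one_eq hf]; exact hseg b
  exact absurd (h1.trans_lt h2) (lt_irrefl _)

lemma lt_skel (hseg : ∀ b : K, #(Set.Iio b) < #K) (hunc : ℵ₀ < #K) (b : K) : b < skel b := by
  classical
  rw [skel, dif_pos (nomax hseg hunc b)]
  exact WellFounded.min_mem _ _ _

lemma skel_le (hseg : ∀ b : K, #(Set.Iio b) < #K) (hunc : ℵ₀ < #K) {b c : K} (h : b < c) :
    skel b ≤ c := by
  classical
  rw [skel, dif_pos (nomax hseg hunc b)]
  exact not_lt.1 (WellFounded.not_lt_min _ _ h)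

lemma le_of_lt_skel (hseg : ∀ b : K, #(Set.Iio b) < #K) (hunc : ℵ₀ < #K) {i b : K}
    (h : i < skel b) : i ≤ b :=
  not_lt.1 fun hb => absurd ((skel_le hseg hunc hb).trans_lt h) (lt_irrefl _)

lemma isRegularK (hunc : ℵ₀ < #K) (hpow : Cardinal.powerlt #K #K = #K) :
    (#K).IsRegular := by
  refine ⟨hunc.le, ?_⟩
  by_contra h
  push_neg at h
  have h1 : #K < #K ^ ((#K).ord.cof) := Cardinal.lt_power_cof hunc.le
  have h2 : #K ^ ((#K).ord.cof) ≤ Cardinal.powerlt #K #K := Cardinal.le_powerlt _ h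
  rw [hpow] at h2
  exact absurd (h1.trans_le h2) (lt_irrefl _)

lemma card_Iic (hseg : ∀ b : K, #(Set.Iio b) < #K) (hunc : ℵ₀ < #K) (b : K) :
    #(Set.Iic b) < #K := by
  rw [← Set.Iio_insert]
  refine (Cardinal.mk_insert_le).trans_lt ?_
  rcases lt_or_ge (#(Set.Iio b)) ℵ₀ with hf | hf
  · exact (Cardinal.add_lt_aleph0 hf Cardinal.one_lt_aleph0).trans hunc
  · rw [Cardinal.add_one_eq hf]; exact hseg b

lemma bdd_of_card_lt (hseg : ∀ b : K, #(Set.Iio b) < #K) (hunc : ℵ₀ < #K)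
    (hpow : Cardinal.powerlt #K #K = #K) {A : Set K} (hA : #A < #K) :
    ∃ β : K, ∀ a ∈ A, a ≤ β := by
  by_contra h
  push_neg at h
  have huniv : (Set.univ : Set K) ⊆ ⋃ a : A, Set.Iic a.1 := by
    intro c _
    obtain ⟨a, ha, hca⟩ := h c
    exact Set.mem_iUnion.2 ⟨⟨a, ha⟩, hca.le⟩
  have h1 : #K ≤ Cardinal.sum fun a : A => #(Set.Iic a.1) := by
    rw [← Cardinal.mk_univ (α := K)]
    exact (Cardinal.mk_le_mk_of_subset huniv).trans Cardinal.mk_iUnion_le_sum_mk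
  have h2 : (Cardinal.sum fun a : A => #(Set.Iic a.1)) < #K :=
    Cardinal.sum_lt_of_isRegular (isRegularK hunc hpow) hA fun a => card_Iic hseg hunc _
  exact absurd (h1.trans_lt h2) (lt_irrefl _)

lemma nd_ext {Y : Type u} : ∀ {p q : Nd K Y}, p.1 = q.1 →
    (∀ i (hp : i < p.1) (hq : i < q.1), p.2 ⟨i, hp⟩ = q.2 ⟨i, hq⟩) → p = q := by
  rintro ⟨b, f⟩ ⟨b', g⟩ h hv
  dsimp at h
  subst h
  have : f = g := funext fun i => hv i.1 i.2 i.2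
  rw [this]

lemma nd_apply_eq {Y : Type u} {p q : Nd K Y} (h : p = q) (i : K) (hp : i < p.1) (hq : i < q.1) :
    p.2 ⟨i, hp⟩ = q.2 ⟨i, hq⟩ := by subst h; rfl

lemma ndext_rfl {Y : Type u} (u : Nd K Y) : NdExt K u u := ⟨le_rfl, fun i => rfl⟩

lemma ndext_eq {Y : Type u} {q p : Nd K Y} (hlen : q.1 = p.1) (h : NdExt K q p) : q = p := by
  obtain ⟨h1, h2⟩ := h
  exact nd_ext hlen fun i hp hq => h2 ⟨i, hq⟩

lemma ndres_self {Y : Type u} (u : Nd K Y) : ndRes K u u.1 le_rfl = u :=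
  nd_ext rfl fun i hp hq => rfl

end
section
variable {K : Type u} [LinearOrder K] [WellFoundedLT K] {T : Set (PNd K)}
  (e : Nd K (ULift.{u} Bool) → PNd K)

lemma emono (he : PerfEmb K T e) (z : K → ULift.{u} Bool) {c d : K} (h : c < d) :
    ∃ h' : (e (xRes K z c)).1 < (e (xRes K z d)).1,
      (∀ i : Set.Iio (e (xRes K z c)).1,
        (e (xRes K z d)).2.1 ⟨i.1, i.2.trans h'⟩ = (e (xRes K z c)).2.1 i) ∧
      (∀ i : Set.Iio (e (xRes K z c)).1,
        (e (xRes K z d)).2.2 ⟨i.1, i.2.trans h'⟩ = (e (xRes K z c)).2.2 i) :=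
  he.2.1 (xRes K z c) (xRes K z d) h fun _ => rfl

lemma hgrow (he : PerfEmb K T e) (z : K → ULift.{u} Bool) (b : K) :
    b ≤ (e (xRes K z b)).1 := by
  refine WellFounded.induction (C := fun b => b ≤ (e (xRes K z b)).1) (wellFounded_lt (α := K)) b ?_
  intro b IH
  by_contra h
  push_neg at h
  have h1 := IH _ h
  obtain ⟨h2, -, -⟩ := emono e he z h
  exact absurd (h1.trans_lt h2) (lt_irrefl _)

lemma hglt (he : PerfEmb K T e) (hseg : ∀ b : K, #(Set.Iio b) < #K) (hunc : ℵ₀ < #K)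
    (z : K → ULift.{u} Bool) (i : K) : i < (e (xRes K z (skel i))).1 :=
  (lt_skel hseg hunc i).trans_le (hgrow e he z (skel i))

noncomputable def PAX (z : K → ULift.{u} Bool) (i : K) : K :=
  if h : i < (e (xRes K z (skel i))).1 then (e (xRes K z (skel i))).2.1 ⟨i, h⟩ else i

noncomputable def PAY (z : K → ULift.{u} Bool) (i : K) : K :=
  if h : i < (e (xRes K z (skel i))).1 then (e (xRes K z (skel i))).2.2 ⟨i, h⟩ else i

lemma PAX_eq {z : K → ULift.{u} Bool} {i : K} (h : i < (e (xRes K z (skel i))).1) :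
    PAX e z i = (e (xRes K z (skel i))).2.1 ⟨i, h⟩ := dif_pos h

lemma PAY_eq {z : K → ULift.{u} Bool} {i : K} (h : i < (e (xRes K z (skel i))).1) :
    PAY e z i = (e (xRes K z (skel i))).2.2 ⟨i, h⟩ := dif_pos h

lemma coh1 (he : PerfEmb K T e) (hseg : ∀ b : K, #(Set.Iio b) < #K) (hunc : ℵ₀ < #K)
    (z : K → ULift.{u} Bool) (b : K) (i : K) (h : i < (e (xRes K z b)).1) :
    (e (xRes K z b)).2.1 ⟨i, h⟩ = PAX e z i := by
  have hg : i < (e (xRes K z (skel i))).1 := hglt e he hseg hunc z i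
  rw [PAX_eq e hg]
  rcases lt_trichotomy b (skel i) with hlt | heq | hgt
  · obtain ⟨h', ha, -⟩ := emono e he z hlt
    exact (ha ⟨i, h⟩).symm
  · subst heq; rfl
  · obtain ⟨h', ha, -⟩ := emono e he z hgt
    exact ha ⟨i, hg⟩

lemma coh2 (he : PerfEmb K T e) (hseg : ∀ b : K, #(Set.Iio b) < #K) (hunc : ℵ₀ < #K)
    (z : K → ULift.{u} Bool) (b : K) (i : K) (h : i < (e (xRes K z b)).1) :
    (e (xRes K z b)).2.2 ⟨i, h⟩ = PAY e z i := by
  have hg : i < (e (xRes K z (skel i))).1 := hglt e he hseg hunc z i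
  rw [PAY_eq e hg]
  rcases lt_trichotomy b (skel i) with hlt | heq | hgt
  · obtain ⟨h', -, ha⟩ := emono e he z hlt
    exact (ha ⟨i, h⟩).symm
  · subst heq; rfl
  · obtain ⟨h', -, ha⟩ := emono e he z hgt
    exact ha ⟨i, hg⟩

lemma len_mono_le (he : PerfEmb K T e) (z : K → ULift.{u} Bool) {c d : K} (h : c ≤ d) :
    (e (xRes K z c)).1 ≤ (e (xRes K z d)).1 := by
  rcases h.lt_or_eq with hlt | heq
  · exact (emono e he z hlt).choose.le
  · rw [heq]

lemma compat (he : PerfEmb K T e) {u u' : Nd K (ULift.{u} Bool)} {x' x'' : K → K}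
    (hx' : ∀ i : Set.Iio (e u).1, (e u).2.1 i = x' i.1)
    (hx'' : ∀ i : Set.Iio (e u').1, (e u').2.1 i = x'' i.1)
    (hag : ∀ i, i < (e u).1 → i < (e u').1 → x' i = x'' i) :
    NdExt K u u' ∨ NdExt K u' u := by
  by_contra hcon
  rw [not_or] at hcon
  obtain ⟨n1, n2⟩ := he.2.2.1 u u' hcon.1 hcon.2
  rcases le_total (e u).1 (e u').1 with hle | hle
  · refine n2 ⟨hle, fun i => ?_⟩
    show (e u').2.1 ⟨i.1, lt_of_lt_of_le i.2 hle⟩ = (e u).2.1 i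
    rw [hx'' ⟨i.1, lt_of_lt_of_le i.2 hle⟩, hx' i]
    exact (hag i.1 i.2 (lt_of_lt_of_le i.2 hle)).symm
  · refine n1 ⟨hle, fun i => ?_⟩
    show (e u).2.1 ⟨i.1, lt_of_lt_of_le i.2 hle⟩ = (e u').2.1 i
    rw [hx' ⟨i.1, lt_of_lt_of_le i.2 hle⟩, hx'' i]
    exact hag i.1 (lt_of_lt_of_le i.2 hle) i.2

lemma key (he : PerfEmb K T e) (hseg : ∀ b : K, #(Set.Iio b) < #K) (hunc : ℵ₀ < #K)
    (z z' : K → ULift.{u} Bool) (d : K)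
    (hagr : ∀ j, j < (e (xRes K z d)).1 → PAX e z j = PAX e z' j) :
    ∀ i, i < d → z i = z' i := by
  intro i hid
  by_contra hne
  have hcd : skel i ≤ d := skel_le hseg hunc hid
  have hneu : xRes K z (skel i) ≠ xRes K z' (skel i) := fun hEq =>
    hne (nd_apply_eq hEq i (lt_skel hseg hunc i) (lt_skel hseg hunc i))
  have hcompat := compat e he (u := xRes K z (skel i)) (u' := xRes K z' (skel i))
      (x' := PAX e z) (x'' := PAX e z')
      (fun j => coh1 e he hseg hunc z (skel i) j.1 j.2)
      (fun j => coh1 e he hseg hunc z' (skel i) j.1 j.2)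
      (fun j hj _ => hagr j (lt_of_lt_of_le hj (len_mono_le e he z hcd)))
  rcases hcompat with hc | hc
  · exact hneu (ndext_eq rfl hc)
  · exact hneu (ndext_eq (q := xRes K z' (skel i)) (p := xRes K z (skel i)) rfl hc).symm

lemma PAX_inj (he : PerfEmb K T e) (hseg : ∀ b : K, #(Set.Iio b) < #K) (hunc : ℵ₀ < #K) :
    Function.Injective (PAX e) := by
  intro z z' h
  funext i
  exact key e he hseg hunc z z' (skel i) (fun j _ => by rw [h]) i (lt_skel hseg hunc i)

lemma hbranch (he : PerfEmb K T e) (hT : IsPSubtree K T)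
    (hseg : ∀ b : K, #(Set.Iio b) < #K) (hunc : ℵ₀ < #K) (z : K → ULift.{u} Bool) (b : K) :
    (⟨b, fun i => PAX e z i.1, fun i => PAY e z i.1⟩ : PNd K) ∈ T := by
  have hm := hT (e (xRes K z b)) (he.1 _) b (hgrow e he z b)
  have h1 : (fun i : Set.Iio b =>
      (e (xRes K z b)).2.1 ⟨i.1, lt_of_lt_of_le i.2 (hgrow e he z b)⟩)
      = fun i : Set.Iio b => PAX e z i.1 :=
    funext fun i => coh1 e he hseg hunc z b i.1 _
  have h2 : (fun i : Set.Iio b =>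
      (e (xRes K z b)).2.2 ⟨i.1, lt_of_lt_of_le i.2 (hgrow e he z b)⟩)
      = fun i : Set.Iio b => PAY e z i.1 :=
    funext fun i => coh2 e he hseg hunc z b i.1 _
  rw [h1, h2] at hm
  exact hm

end
section
variable {K : Type u} [LinearOrder K] [WellFoundedLT K] {T : Set (PNd K)}
  (e : Nd K (ULift.{u} Bool) → PNd K)

/-- Nodes whose `e`-image first coordinate is an initial segment of `x`. -/
def Sset (x : K → K) : Set (Nd K (ULift.{u} Bool)) :=
  {u | ∀ i : Set.Iio (e u).1, (e u).2.1 i = x i.1}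

def Dset (x : K → K) : Set K := {c | ∃ u ∈ Sset e x, u.1 = c}

def Vset (x : K → K) : Set (Nd K (ULift.{u} Bool)) :=
  {v | v ∉ Sset e x ∧ ∀ c, ∀ h : c < v.1, ndRes K v c h.le ∈ Sset e x}

lemma chainExt (he : PerfEmb K T e) (x : K → K) :
    ∀ u ∈ Sset e x, ∀ u' ∈ Sset e x, u.1 ≤ u'.1 → NdExt K u' u := by
  intro u hu u' hu' hle
  have h := compat e he (x' := x) (x'' := x) hu hu' (fun i _ _ => rfl)
  rcases h with h | h
  · have heq : u = u' := ndext_eq (le_antisymm hle h.choose) h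
    cases heq
    exact ndext_rfl u
  · exact h

lemma Suniq (he : PerfEmb K T e) (x : K → K) :
    ∀ u ∈ Sset e x, ∀ u' ∈ Sset e x, u.1 = u'.1 → u = u' := by
  intro u hu u' hu' hl
  exact ((ndext_eq hl.symm (chainExt e he x u hu u' hu' hl.le))).symm

lemma Sres (he : PerfEmb K T e) (x : K → K) :
    ∀ u ∈ Sset e x, ∀ c, ∀ h : c ≤ u.1, ndRes K u c h ∈ Sset e x := by
  intro u hu c h
  rcases h.lt_or_eq with hlt | heq
  · obtain ⟨h', ha, -⟩ := he.2.1 (ndRes K u c h) u hlt (fun i => rfl)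
    intro i
    rw [← ha i]
    exact hu ⟨i.1, i.2.trans h'⟩
  · subst heq
    exact (ndres_self u).symm ▸ hu

lemma closedC (he : PerfEmb K T e) (hseg : ∀ b : K, #(Set.Iio b) < #K) (hunc : ℵ₀ < #K)
    (hpow : Cardinal.powerlt #K #K = #K) :
    IsClosed[bTop K K] (Set.range (PAX e)) := by
  classical
  letI : TopologicalSpace (K → K) := bTop K K
  rw [← isOpen_compl_iff, isOpen_iff_forall_mem_open]
  intro x hx
  by_cases hDall : ∀ c, c ∈ Dset e x
  · exfalso
    choose uc hucS hucl using hDall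
    set z : K → ULift.{u} Bool :=
      fun i => (uc (skel i)).2 ⟨i, (lt_skel hseg hunc i).trans_eq (hucl (skel i)).symm⟩ with hz
    have hzS : ∀ c, xRes K z c ∈ Sset e x := by
      intro c
      have heq : xRes K z c = uc c := by
        refine nd_ext (hucl c).symm ?_
        intro i hp hq
        obtain ⟨hl, hvals⟩ := chainExt e he x (uc (skel i)) (hucS _) (uc c) (hucS _)
          (by rw [hucl, hucl]; exact skel_le hseg hunc hp)
        exact (hvals ⟨i, (lt_skel hseg hunc i).trans_eq (hucl (skel i)).symm⟩).symm
      rw [heq]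
      exact hucS c
    refine hx ⟨z, ?_⟩
    funext i
    have hgi := hglt e he hseg hunc z i
    rw [PAX_eq e hgi]
    exact hzS (skel i) ⟨i, hgi⟩
  · push_neg at hDall
    obtain ⟨c1, hc1⟩ := hDall
    have hne : Set.Nonempty {c | c ∉ Dset e x} := ⟨c1, hc1⟩
    set b := (wellFounded_lt (α := K)).min {c | c ∉ Dset e x} hne with hbdef
    have hbD : b ∉ Dset e x := (wellFounded_lt (α := K)).min_mem _ hne
    have hVb : ∀ v ∈ Vset e x, v.1 ≤ b := by
      intro v hv
      by_contra hlt
      push_neg at hlt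
      exact hbD ⟨ndRes K v b hlt.le, hv.2 b hlt, rfl⟩
    have hVcard : #(Vset e x) < #K := by
      have hinj : Function.Injective (fun v : Vset e x =>
          ((⟨v.1.1, hVb v.1 v.2⟩ : Set.Iic b),
           if h : ∃ c, c < v.1.1 ∧ ∀ i, i < v.1.1 → i ≤ c then
             v.1.2 ⟨h.choose, h.choose_spec.1⟩ else (default : ULift.{u} Bool))) := by
        rintro ⟨⟨ℓ, f⟩, hvf⟩ ⟨⟨ℓ', g⟩, hwg⟩ hEq
        simp only [Prod.mk.injEq, Subtype.mk.injEq] at hEq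
        obtain ⟨hlen, hsnd⟩ := hEq
        replace hlen : ℓ = ℓ' := congrArg Subtype.val hlen
        subst hlen
        refine Subtype.ext (nd_ext rfl ?_)
        intro i hp hq
        by_cases h : ∃ c, c < ℓ ∧ ∀ i', i' < ℓ → i' ≤ c
        · rw [dif_pos h, dif_pos h] at hsnd
          rcases lt_or_eq_of_le (h.choose_spec.2 i hp) with hic | hic
          · have h1 := hvf.2 h.choose h.choose_spec.1
            have h2 := hwg.2 h.choose h.choose_spec.1
            have h3 := Suniq e he x _ h1 _ h2 rfl
            exact nd_apply_eq h3 i hic hic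
          · subst hic
            exact hsnd
        · push_neg at h
          obtain ⟨j, hjl, hij⟩ := h i hp
          have h1 := hvf.2 j hjl
          have h2 := hwg.2 j hjl
          have h3 := Suniq e he x _ h1 _ h2 rfl
          exact nd_apply_eq h3 i hij hij
      refine (Cardinal.mk_le_of_injective hinj).trans_lt ?_
      have hcard : #(↥(Set.Iic b) × ULift.{u} Bool) = #(Set.Iic b) * 2 := by
        simp [Cardinal.mk_prod, Cardinal.mk_bool]
      rw [hcard]
      refine Cardinal.mul_lt_of_lt hunc.le (card_Iic hseg hunc b) ?_
      exact lt_trans (by exact_mod_cast Cardinal.nat_lt_aleph0 2) hunc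
    obtain ⟨β, hβ⟩ := bdd_of_card_lt hseg hunc hpow
      (A := Set.range fun v : Vset e x => (e v.1).1) ((Cardinal.mk_range_le).trans_lt hVcard)
    refine ⟨{x' | ∀ i, i < skel β → x' i = x i}, ?_,
      TopologicalSpace.isOpen_generateFrom_of_mem ⟨skel β, x, rfl⟩, fun i _ => rfl⟩
    rintro x' hx' ⟨z, rfl⟩
    have hWne : Set.Nonempty {c | xRes K z c ∉ Sset e x} :=
      ⟨b, fun hbS => hbD ⟨xRes K z b, hbS, rfl⟩⟩
    set c0 := (wellFounded_lt (α := K)).min {c | xRes K z c ∉ Sset e x} hWne with hc0def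
    have hc0m : xRes K z c0 ∉ Sset e x := (wellFounded_lt (α := K)).min_mem _ hWne
    have hvV : xRes K z c0 ∈ Vset e x := by
      refine ⟨hc0m, ?_⟩
      intro c hcc
      have hcS : xRes K z c ∈ Sset e x := by
        by_contra hcS
        exact (wellFounded_lt (α := K)).not_lt_min _ hcS hcc
      have hres : ndRes K (xRes K z c0) c hcc.le = xRes K z c := nd_ext rfl (fun i hp hq => rfl)
      rw [hres]
      exact hcS
    have hlenβ : (e (xRes K z c0)).1 ≤ β := hβ _ ⟨⟨_, hvV⟩, rfl⟩
    have hnall : ¬ ∀ i : Set.Iio (e (xRes K z c0)).1, (e (xRes K z c0)).2.1 i = x i.1 := hc0m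
    push_neg at hnall
    obtain ⟨⟨γ, hγ⟩, hne2⟩ := hnall
    refine hne2 ?_
    have e1 : (e (xRes K z c0)).2.1 ⟨γ, hγ⟩ = PAX e z γ := coh1 e he hseg hunc z c0 γ hγ
    have e2 : PAX e z γ = x γ := hx' γ (lt_of_le_of_lt (hγ.le.trans hlenβ) (lt_skel hseg hunc β))
    rw [e1, e2]
end
section
variable {K : Type u} [LinearOrder K] [WellFoundedLT K] {T : Set (PNd K)}
  (e : Nd K (ULift.{u} Bool) → PNd K)

lemma PAX_agree (hseg : ∀ b : K, #(Set.Iio b) < #K) (hunc : ℵ₀ < #K)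
    {z z' : K → ULift.{u} Bool} {d : K} (h : ∀ j, j < d → z j = z' j) {i : K} (hid : i < d) :
    PAX e z i = PAX e z' i := by
  have hnode : xRes K z (skel i) = xRes K z' (skel i) :=
    nd_ext rfl (fun j hp _ => h j (lt_of_le_of_lt (le_of_lt_skel hseg hunc hp) hid))
  unfold PAX
  rw [hnode]
end

/-- If there is an `∃^x`-perfect embedding into a product tree `T`, then
`p[T]` contains a closed copy of the Cantor space `K → 2`. -/
theorem perfEmb_closed_cantor_copy (K : Type u) [LinearOrder K] [WellFoundedLT K]
    (hseg : ∀ b : K, #(Set.Iio b) < #K)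
    (hunc : ℵ₀ < #K) (hpow : Cardinal.powerlt #K #K = #K)
    (T : Set (PNd K)) (hT : IsPSubtree K T)
    (e : Nd K (ULift.{u} Bool) → PNd K) (he : PerfEmb K T e) :
    ∃ C ⊆ pProj K T, IsClosed[bTop K K] C ∧ HomeoToCantor K C := by
  classical
  refine ⟨Set.range (PAX e), ?_, closedC e he hseg hunc hpow, ?_⟩
  · rintro x ⟨z, rfl⟩
    exact ⟨PAY e z, fun b => hbranch e he hT hseg hunc z b⟩
  · letI : TopologicalSpace (K → K) := bTop K K
    letI : TopologicalSpace (K → ULift.{u} Bool) := bTop K (ULift.{u} Bool)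
    have hinj := PAX_inj e he hseg hunc
    refine ⟨Homeomorph.symm
      { toFun := fun z => (⟨PAX e z, Set.mem_range_self z⟩ : ↥(Set.range (PAX e))),
        invFun := fun p => Classical.choose p.2,
        left_inv := fun z => hinj (Classical.choose_spec (Set.mem_range_self (f := PAX e) z)),
        right_inv := fun p => Subtype.ext (Classical.choose_spec p.2),
        continuous_toFun := ?_,
        continuous_invFun := ?_ }⟩
    · refine Continuous.subtype_mk ?_ _
      refine continuous_generateFrom_iff.mpr ?_
      rintro s ⟨d, σ, rfl⟩
      rw [isOpen_iff_forall_mem_open]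
      intro z hz
      refine ⟨{z' | ∀ i, i < d → z' i = z i}, ?_,
        TopologicalSpace.isOpen_generateFrom_of_mem ⟨d, z, rfl⟩, fun i _ => rfl⟩
      intro z' hz'
      intro i hid
      have h1 : PAX e z' i = PAX e z i := (PAX_agree e hseg hunc (fun j hj => (hz' j hj).symm) hid).symm
      show PAX e z' i = σ i
      rw [h1]
      exact hz i hid
    · refine continuous_generateFrom_iff.mpr ?_
      rintro s ⟨d, σ, rfl⟩
      rw [isOpen_iff_forall_mem_open]
      rintro ⟨x0, hx0⟩ hp
      have hw : PAX e (Classical.choose hx0) = x0 := Classical.choose_spec hx0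
      have hp' : ∀ i, i < d → Classical.choose hx0 i = σ i := hp
      refine ⟨Subtype.val ⁻¹' {x' | ∀ i, i < (e (xRes K (Classical.choose hx0) d)).1 → x' i = x0 i},
        ?_, IsOpen.preimage continuous_subtype_val
          (TopologicalSpace.isOpen_generateFrom_of_mem ⟨_, x0, rfl⟩), fun i _ => rfl⟩
      rintro ⟨x1, hx1⟩ hq
      have hw' : PAX e (Classical.choose hx1) = x1 := Classical.choose_spec hx1
      intro i hid
      have hkey := key e he hseg hunc (Classical.choose hx0) (Classical.choose hx1) d
        (fun j hj => by rw [hw, hw']; exact (hq j hj).symm) i hid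
      show Classical.choose hx1 i = σ i
      rw [← hkey]
      exact hp' i hid
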